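/- Let m ≥ 1 be an integer and let p, q ∈ [1,∞] and θ ∈ (0,1] satisfy −m/q = θ(−m/p) + (1−θ)/2. Then there exists a constant C > 0 depending only on m, p, q such that for every r ∈ [1/2, 1] and every continuous function u : B_r → ℝ (B_r the open ball of radius r centered at 0 in ℝ^m) with finite ‖u‖_{C^{1/2}(B_r)}, one has ‖u‖_{L^q(B_r)} ≤ C ‖u‖_{L^p(B_r)}^θ ‖u‖_{C^{1/2}(B_r)}^{1−θ}. -/

import Mathlib

open MeasureTheory Metric Set Function
open scoped ENNReal NNReal

noncomputable section

/-- `L^p`-type norm (valued in `ℝ≥0∞`) of an `ℝ≥0∞`-valued function, with the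
essential supremum convention when `p = ∞`. -/
def eLp {α : Type*} [MeasurableSpace α] (μ : Measure α) (p : ℝ≥0∞) (f : α → ℝ≥0∞) : ℝ≥0∞ :=
  if p = ∞ then essSup f μ else (∫⁻ a, f a ^ p.toReal ∂μ) ^ (1 / p.toReal)

/-- A small ball inside the intersection of a ball around an interior point and the big ball. -/
theorem aux_ball_inter_sub {E : Type*} [NormedAddCommGroup E] [NormedSpace ℝ E]
    (x0 : E) (r ρ : ℝ) (hx0 : x0 ∈ ball (0:E) r) (hρ : 0 < ρ) (hr : 0 < r) :
    ∃ y : E, ball y (min ρ r / 2) ⊆ ball x0 ρ ∩ ball (0:E) r := by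
  set s := min ρ r / 2 with hs
  have hs0 : 0 < s := by positivity
  have hsρ : 2 * s ≤ ρ := by
    have := min_le_left ρ r; simp only [hs]; linarith
  have hsr : s ≤ r / 2 := by
    have := min_le_right ρ r; simp only [hs]; linarith
  rcases le_or_gt ‖x0‖ s with h | h
  · refine ⟨0, fun z hz => ?_⟩
    simp only [mem_ball, mem_inter_iff] at hz ⊢
    have hz' : ‖z‖ < s := by simpa [dist_zero_right] using hz
    constructor
    · calc dist z x0 ≤ ‖z‖ + ‖x0‖ := dist_le_norm_add_norm z x0
        _ < s + s := by linarith
        _ ≤ ρ := by linarith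
    · rw [dist_zero_right]; linarith
  · refine ⟨(1 - s / ‖x0‖) • x0, fun z hz => ?_⟩
    have hx0n : 0 < ‖x0‖ := lt_trans hs0 h
    have hx0r : ‖x0‖ < r := by simpa [dist_zero_right] using hx0
    have hdyx : dist ((1 - s / ‖x0‖) • x0) x0 = s := by
      rw [dist_eq_norm]
      have : (1 - s / ‖x0‖) • x0 - x0 = (-(s / ‖x0‖)) • x0 := by
        rw [sub_smul, one_smul, neg_smul]; abel
      rw [this, norm_smul, norm_neg, Real.norm_eq_abs, abs_of_pos (by positivity)]
      field_simp
    have hny : ‖(1 - s / ‖x0‖) • x0‖ = ‖x0‖ - s := by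
      rw [norm_smul, Real.norm_eq_abs, abs_of_pos (by rw [sub_pos, div_lt_one hx0n]; exact h)]
      field_simp
    simp only [mem_ball, mem_inter_iff] at hz ⊢
    constructor
    · calc dist z x0 ≤ dist z ((1 - s / ‖x0‖) • x0) + dist ((1 - s / ‖x0‖) • x0) x0 :=
          dist_triangle _ _ _
        _ < s + s := by rw [hdyx]; linarith
        _ ≤ ρ := by linarith
    · rw [dist_zero_right]
      calc ‖z‖ ≤ ‖z - (1 - s / ‖x0‖) • x0‖ + ‖(1 - s / ‖x0‖) • x0‖ := by
            have := norm_sub_norm_le z ((1 - s / ‖x0‖) • x0)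
            linarith [norm_nonneg (z - (1 - s / ‖x0‖) • x0)]
        _ < s + (‖x0‖ - s) := by
            rw [hny]; exact add_lt_add_left (by simpa [dist_eq_norm] using hz) _
        _ < r := by linarith

theorem aux_volume_ball (m : ℕ) (hm : 1 ≤ m) (x : EuclideanSpace ℝ (Fin m)) (r : ℝ) (hr : 0 ≤ r) :
    volume (ball x r) = ENNReal.ofReal (r ^ m) * volume (ball (0 : EuclideanSpace ℝ (Fin m)) 1) := by
  haveI : Nonempty (Fin m) := ⟨⟨0, hm⟩⟩
  haveI : Nontrivial (EuclideanSpace ℝ (Fin m)) := by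
    infer_instance
  rw [Measure.addHaar_ball volume x hr, finrank_euclideanSpace_fin]

set_option maxHeartbeats 2000000 in
/-- Gagliardo–Nirenberg-type interpolation between Lebesgue norms and the
Hölder-`1/2` norm on balls `B_r ⊆ ℝ^m`, `r ∈ [1/2, 1]`. -/
theorem stmt18 (m : ℕ) (hm : 1 ≤ m) (p q : ℝ≥0∞) (hp : 1 ≤ p) (hq : 1 ≤ q)
    (θ : ℝ) (hθ : θ ∈ Set.Ioc (0:ℝ) 1)
    (hrel : -((m : ℝ) / q.toReal) = θ * (-((m : ℝ) / p.toReal)) + (1 - θ) / 2) :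
    ∃ C > (0:ℝ),
      ∀ r ∈ Set.Icc (1/2 : ℝ) 1,
      ∀ u : EuclideanSpace ℝ (Fin m) → ℝ,
      ContinuousOn u (ball 0 r) →
      BddAbove ((fun x => |u x|) '' ball (0 : EuclideanSpace ℝ (Fin m)) r) →
      BddAbove ((fun z : EuclideanSpace ℝ (Fin m) × EuclideanSpace ℝ (Fin m) =>
          |u z.1 - u z.2| / dist z.1 z.2 ^ (1/2 : ℝ)) ''
        {z : EuclideanSpace ℝ (Fin m) × EuclideanSpace ℝ (Fin m) |
          z.1 ∈ ball 0 r ∧ z.2 ∈ ball 0 r ∧ z.1 ≠ z.2}) →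
      ∀ H : ℝ,
      H = sSup ((fun x => |u x|) '' ball (0 : EuclideanSpace ℝ (Fin m)) r)
          + sSup ((fun z : EuclideanSpace ℝ (Fin m) × EuclideanSpace ℝ (Fin m) =>
              |u z.1 - u z.2| / dist z.1 z.2 ^ (1/2 : ℝ)) ''
            {z : EuclideanSpace ℝ (Fin m) × EuclideanSpace ℝ (Fin m) |
              z.1 ∈ ball 0 r ∧ z.2 ∈ ball 0 r ∧ z.1 ≠ z.2}) →
      eLp (volume.restrict (ball (0 : EuclideanSpace ℝ (Fin m)) r)) q
          (fun x => (‖u x‖₊ : ℝ≥0∞)) ≤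
        ENNReal.ofReal C *
          (eLp (volume.restrict (ball (0 : EuclideanSpace ℝ (Fin m)) r)) p
            (fun x => (‖u x‖₊ : ℝ≥0∞))) ^ θ *
          ENNReal.ofReal H ^ (1 - θ) := by
  obtain ⟨hθ0, hθ1⟩ := hθ
  have hm' : (0:ℝ) < m := by exact_mod_cast hm
  set ω := (volume (ball (0 : EuclideanSpace ℝ (Fin m)) 1)).toReal with hωdef
  have hω0 : 0 < ω :=
    ENNReal.toReal_pos (measure_ball_pos volume 0 one_pos).ne' measure_ball_lt_top.ne
  set p' := p.toReal with hp'def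
  set α := p' / (p' + 2*(m:ℝ)) with hαdef
  set cB := 2 * ((4:ℝ)^m / ω) ^ (1/p') with hcBdef
  set cA := ((2:ℝ) ^ p' * 32^m / ω) ^ (1/(p' + 2*(m:ℝ))) with hcAdef
  set c1 := max (cB ^ α) cA with hc1def
  set C := max 1 c1 with hCdef
  have hC1 : (1:ℝ) ≤ C := le_max_left _ _
  have hC0 : (0:ℝ) ≤ C := by linarith
  refine ⟨C, lt_of_lt_of_le one_pos hC1, ?_⟩
  intro r hr u hu hb1 hb2 H hHdef
  obtain ⟨hr2, hr1⟩ := hr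
  have hr0 : (0:ℝ) < r := by linarith
  set f : EuclideanSpace ℝ (Fin m) → ℝ≥0∞ := fun x => (‖u x‖₊ : ℝ≥0∞) with hfdef
  have hf : ∀ x, f x = ENNReal.ofReal |u x| := by
    intro x
    show (‖u x‖₊ : ℝ≥0∞) = ENNReal.ofReal |u x|
    rw [← Real.norm_eq_abs]; exact (ENNReal.ofReal_eq_coe_nnreal (norm_nonneg _)).symm
  set μ := volume.restrict (ball (0 : EuclideanSpace ℝ (Fin m)) r) with hμdef
  set M := sSup ((fun x => |u x|) '' ball (0 : EuclideanSpace ℝ (Fin m)) r) with hMdef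
  set S2 := sSup ((fun z : EuclideanSpace ℝ (Fin m) × EuclideanSpace ℝ (Fin m) =>
      |u z.1 - u z.2| / dist z.1 z.2 ^ (1/2 : ℝ)) ''
    {z : EuclideanSpace ℝ (Fin m) × EuclideanSpace ℝ (Fin m) |
      z.1 ∈ ball 0 r ∧ z.2 ∈ ball 0 r ∧ z.1 ≠ z.2}) with hS2def
  have hM0 : 0 ≤ M := Real.sSup_nonneg (by rintro y ⟨x, hx, rfl⟩; positivity)
  have hS20 : 0 ≤ S2 := Real.sSup_nonneg (by rintro y ⟨z, hz, rfl⟩; positivity)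
  have hHM : H = M + S2 := hHdef
  have hMH : M ≤ H := by rw [hHM]; linarith
  have hH0 : 0 ≤ H := le_trans hM0 hMH
  have hMx : ∀ x ∈ ball (0:EuclideanSpace ℝ (Fin m)) r, |u x| ≤ M :=
    fun x hx => le_csSup hb1 ⟨x, hx, rfl⟩
  have hHol : ∀ x ∈ ball (0:EuclideanSpace ℝ (Fin m)) r,
      ∀ y ∈ ball (0:EuclideanSpace ℝ (Fin m)) r,
      |u x - u y| ≤ H * dist x y ^ (1/2 : ℝ) := by
    intro x hx y hy
    rcases eq_or_ne x y with rfl | hne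
    · simp
    · have hd0 : (0:ℝ) < dist x y ^ (1/2 : ℝ) :=
        Real.rpow_pos_of_pos (dist_pos.mpr hne) _
      have h1 : |u x - u y| / dist x y ^ (1/2 : ℝ) ≤ S2 :=
        le_csSup hb2 ⟨(x, y), ⟨hx, hy, hne⟩, rfl⟩
      have h2 : S2 ≤ H := by rw [hHM]; linarith
      rw [div_le_iff₀ hd0] at h1
      calc |u x - u y| ≤ S2 * dist x y ^ (1/2 : ℝ) := h1
        _ ≤ H * dist x y ^ (1/2 : ℝ) := mul_le_mul_of_nonneg_right h2 hd0.le
  by_cases hpt : p = ∞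
  · -- case p = ∞ : forces q = ∞ and θ = 1
    have hp0 : p' = 0 := by rw [hp'def, hpt]; simp
    rw [hp0] at hrel
    simp only [div_zero, neg_zero, mul_zero, zero_add] at hrel
    have hq0' : (0:ℝ) ≤ (m:ℝ) / q.toReal :=
      div_nonneg (le_of_lt hm') ENNReal.toReal_nonneg
    have hθeq : θ = 1 := by linarith only [hq0', hrel, hθ1]
    have hq0 : (m:ℝ) / q.toReal = 0 := by linarith only [hq0', hrel, hθ1]
    have hqt : q = ∞ := by
      rcases div_eq_zero_iff.mp hq0 with h | h
      · exact absurd h (by positivity)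
      · rcases (ENNReal.toReal_eq_zero_iff q).mp h with h' | h'
        · rw [h'] at hq; simp at hq
        · exact h'
    rw [hqt, hpt, hθeq]
    simp only [eLp, if_pos rfl, sub_self, ENNReal.rpow_one, ENNReal.rpow_zero, mul_one]
    calc essSup f μ = 1 * essSup f μ := (one_mul _).symm
      _ ≤ ENNReal.ofReal C * essSup f μ :=
          mul_le_mul_left (by simpa using ENNReal.one_le_ofReal.mpr hC1) _
  · -- p finite
    have hp1 : 1 ≤ p' := by
      rw [hp'def, ← ENNReal.toReal_one]; exact ENNReal.toReal_mono hpt hp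
    have hp'0 : 0 < p' := by linarith
    have hcden : (0:ℝ) < p' + 2*(m:ℝ) := by positivity
    have hα0 : 0 < α := by rw [hαdef]; positivity
    have hα1 : α < 1 := by rw [hαdef, div_lt_one hcden]; linarith
    have hfb : ∀ x ∈ ball (0:EuclideanSpace ℝ (Fin m)) r, ∀ e : ℝ, 0 ≤ e →
        f x ^ e ≤ ENNReal.ofReal (H ^ e) := by
      intro x hx e he
      calc f x ^ e = ENNReal.ofReal |u x| ^ e := by rw [hf x]
        _ ≤ ENNReal.ofReal H ^ e :=
            ENNReal.rpow_le_rpow (ENNReal.ofReal_le_ofReal (le_trans (hMx x hx) hMH)) he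
        _ = ENNReal.ofReal (H ^ e) := ENNReal.ofReal_rpow_of_nonneg hH0 he
    have hvolr : μ Set.univ ≠ ∞ := by
      rw [hμdef, Measure.restrict_apply_univ]; exact measure_ball_lt_top.ne
    have hIfin : ∀ e : ℝ, 0 ≤ e → (∫⁻ x, f x ^ e ∂μ) ≠ ∞ := by
      intro e he
      have hb : ∀ᵐ x ∂μ, f x ^ e ≤ ENNReal.ofReal (H ^ e) :=
        ae_restrict_of_forall_mem measurableSet_ball fun x hx => hfb x hx e he
      refine ne_top_of_le_ne_top ?_ (lintegral_mono_ae hb)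
      rw [lintegral_const]
      exact (ENNReal.mul_lt_top ENNReal.ofReal_lt_top hvolr.lt_top).ne
    set Ip := ∫⁻ x, f x ^ p' ∂μ with hIpdef
    have hIptop : Ip ≠ ∞ := hIfin p' hp'0.le
    set β := Ip.toReal with hβdef
    set a := β ^ (1/p') with hadef
    have ha0 : 0 ≤ a := Real.rpow_nonneg ENNReal.toReal_nonneg _
    have hIpa : Ip ^ (1/p') = ENNReal.ofReal a := by
      rw [← ENNReal.ofReal_toReal hIptop, ← hβdef,
        ENNReal.ofReal_rpow_of_nonneg ENNReal.toReal_nonneg (one_div_pos.mpr hp'0).le, hadef]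
    by_cases hMz : M = 0
    · -- u vanishes on the ball
      have hfz : ∀ x ∈ ball (0:EuclideanSpace ℝ (Fin m)) r, f x = 0 := by
        intro x hx
        have h0 : |u x| = 0 := le_antisymm (hMz ▸ hMx x hx) (abs_nonneg _)
        rw [hf x, h0, ENNReal.ofReal_zero]
      have hae : ∀ᵐ x ∂μ, f x = 0 := ae_restrict_of_forall_mem measurableSet_ball hfz
      rcases eq_or_ne q ∞ with hqt | hqt
      · rw [hqt]
        simp only [eLp, if_pos rfl]
        calc essSup f μ ≤ 0 :=
              essSup_le_of_ae_le 0 (by filter_upwards [hae] with x hx; rw [hx])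
          _ ≤ _ := zero_le
      · have hq1 : 1 ≤ q.toReal := by
          rw [← ENNReal.toReal_one]; exact ENNReal.toReal_mono hqt hq
        have hq'0 : 0 < q.toReal := by linarith
        simp only [eLp, if_neg hqt]
        have hz : (∫⁻ x, f x ^ q.toReal ∂μ) = 0 := by
          have : (fun x => f x ^ q.toReal) =ᵐ[μ] 0 := by
            filter_upwards [hae] with x hx
            simp [hx, ENNReal.zero_rpow_of_pos hq'0]
          rw [lintegral_congr_ae this]
          simp
        rw [hz, ENNReal.zero_rpow_of_pos (one_div_pos.mpr hq'0)]
        exact zero_le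
    · -- M > 0 : the core case
      have hM1 : 0 < M := lt_of_le_of_ne hM0 (Ne.symm hMz)
      have hH1 : 0 < H := lt_of_lt_of_le hM1 hMH
      set t := M / (4*H) with htdef
      have ht0 : 0 < t := by positivity
      set ρ := t^2 with hρdef
      have hρ0 : 0 < ρ := by positivity
      have hne : ((fun x => |u x|) '' ball (0:EuclideanSpace ℝ (Fin m)) r).Nonempty :=
        ⟨|u 0|, 0, mem_ball_self hr0, rfl⟩
      obtain ⟨y0, ⟨x0, hx0b, rfl⟩, hx0⟩ :=
        exists_lt_of_lt_csSup hne (show 3*M/4 < M by linarith)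
      have hlow : ∀ x ∈ ball x0 ρ ∩ ball (0:EuclideanSpace ℝ (Fin m)) r, M/2 ≤ |u x| := by
        rintro x ⟨hx1, hx2⟩
        have hd : dist x x0 ^ (1/2:ℝ) ≤ t := by
          have h2 : ρ ^ (1/2:ℝ) = t := by
            rw [hρdef, ← Real.rpow_natCast t 2, ← Real.rpow_mul ht0.le]
            norm_num
          rw [← h2]
          exact Real.rpow_le_rpow dist_nonneg (le_of_lt (mem_ball.mp hx1)) (by norm_num)
        have h3 := hHol x hx2 x0 hx0b
        have h4 : H * dist x x0 ^ (1/2:ℝ) ≤ H * t := mul_le_mul_of_nonneg_left hd hH0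
        have h5 : H * t = M/4 := by rw [htdef]; field_simp
        have h6 : |u x0| - |u x| ≤ |u x - u x0| := by
          rw [abs_sub_comm]; exact abs_sub_abs_le_abs_sub _ _
        linarith
      obtain ⟨y, hy⟩ := aux_ball_inter_sub x0 r ρ hx0b hρ0 hr0
      set s := min ρ r / 2 with hsdef
      have hs0 : 0 < s := by positivity
      have hvol : volume (ball y s) = ENNReal.ofReal (s^m * ω) := by
        rw [aux_volume_ball m hm y s hs0.le,
          ENNReal.ofReal_mul (by positivity : (0:ℝ) ≤ s^m)]
        congr 1
        rw [hωdef, ENNReal.ofReal_toReal measure_ball_lt_top.ne]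
      have hIplow : ENNReal.ofReal ((M/2)^p' * (s^m * ω)) ≤ Ip := by
        have hsub : ball y s ⊆ ball (0:EuclideanSpace ℝ (Fin m)) r :=
          hy.trans inter_subset_right
        have step1 : ∫⁻ x in ball y s, f x ^ p' ∂volume ≤ Ip := by
          rw [hIpdef, hμdef]
          exact lintegral_mono' (Measure.restrict_mono hsub le_rfl) le_rfl
        have hptw : ∀ x ∈ ball y s, ENNReal.ofReal ((M/2)^p') ≤ f x ^ p' := by
          intro x hx
          rw [hf x, ← ENNReal.ofReal_rpow_of_nonneg (by positivity : (0:ℝ) ≤ M/2) hp'0.le]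
          exact ENNReal.rpow_le_rpow (ENNReal.ofReal_le_ofReal (hlow x (hy hx))) hp'0.le
        have step2 : ENNReal.ofReal ((M/2)^p' * (s^m * ω)) ≤
            ∫⁻ x in ball y s, f x ^ p' ∂volume := by
          calc ENNReal.ofReal ((M/2)^p' * (s^m * ω))
              = ENNReal.ofReal ((M/2)^p') * volume (ball y s) := by
                rw [hvol, ← ENNReal.ofReal_mul (by positivity)]
            _ = ∫⁻ _ in ball y s, ENNReal.ofReal ((M/2)^p') ∂volume := by
                rw [setLIntegral_const]
            _ ≤ ∫⁻ x in ball y s, f x ^ p' ∂volume :=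
                lintegral_mono_ae (ae_restrict_of_forall_mem measurableSet_ball hptw)
        exact le_trans step2 step1
      have hβlow : (M/2)^p' * (s^m * ω) ≤ β :=
        (ENNReal.ofReal_le_iff_le_toReal hIptop).mp hIplow
      have hMp0 : (0:ℝ) < (M/2)^p' := Real.rpow_pos_of_pos (by linarith) _
      have hβ0 : 0 < β := lt_of_lt_of_le (by positivity) hβlow
      have ha1 : 0 < a := Real.rpow_pos_of_pos hβ0 _
      have haβ : a ^ p' = β := by
        rw [hadef, ← Real.rpow_mul hβ0.le, one_div, inv_mul_cancel₀ (ne_of_gt hp'0),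
          Real.rpow_one]
      have hfrac0 : (0:ℝ) ≤ (4:ℝ)^m / ω := div_nonneg (by positivity) hω0.le
      have hcB0 : (0:ℝ) ≤ cB := by
        rw [hcBdef]; exact mul_nonneg (by norm_num) (Real.rpow_nonneg hfrac0 _)
      have hc10 : (0:ℝ) ≤ c1 := le_trans (Real.rpow_nonneg hcB0 α) (le_max_left _ _)
      -- the core sup estimate
      have hcore : M ≤ c1 * a ^ α * H ^ (1 - α) := by
        rcases le_or_gt r ρ with hcase | hcase
        · -- big ρ : M ≤ cB * a
          have hsval : s = r/2 := by rw [hsdef, min_eq_right hcase]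
          have hs4 : (1/4:ℝ) ≤ s := by rw [hsval]; linarith
          have h1 : (M/2)^p' * ((1/4)^m * ω) ≤ β := by
            refine le_trans ?_ hβlow
            have hps : ((1/4:ℝ))^m ≤ s^m := pow_le_pow_left₀ (by norm_num) hs4 m
            exact mul_le_mul_of_nonneg_left (mul_le_mul_of_nonneg_right hps hω0.le) hMp0.le
          have h2 : (M/2)^p' ≤ β * ((4:ℝ)^m / ω) := by
            have h3 : (0:ℝ) < ((1/4:ℝ))^m * ω := by positivity
            rw [← le_div_iff₀ h3] at h1
            calc (M/2)^p' ≤ β / ((1/4)^m * ω) := h1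
              _ = β * ((4:ℝ)^m / ω) := by
                  rw [one_div, inv_pow]; field_simp
          have h4 : M/2 ≤ a * ((4:ℝ)^m/ω) ^ (1/p') := by
            have h5 : ((M/2)^p')^(1/p') ≤ (β * ((4:ℝ)^m/ω))^(1/p') :=
              Real.rpow_le_rpow hMp0.le h2 (one_div_pos.mpr hp'0).le
            rw [← Real.rpow_mul (by positivity : (0:ℝ) ≤ M/2), mul_one_div,
              div_self (ne_of_gt hp'0), Real.rpow_one,
              Real.mul_rpow hβ0.le hfrac0] at h5
            rw [hadef]
            exact h5
          have h6 : M ≤ cB * a := by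
            calc M ≤ 2*(a * ((4:ℝ)^m/ω) ^ (1/p')) := by linarith
              _ = cB * a := by rw [hcBdef]; ring
          have h7 : α + (1-α) = 1 := by ring
          calc M = M ^ (α + (1-α)) := by rw [h7, Real.rpow_one]
            _ = M ^ α * M ^ (1-α) := Real.rpow_add hM1 _ _
            _ ≤ (cB*a)^α * H^(1-α) :=
                mul_le_mul (Real.rpow_le_rpow hM0 h6 hα0.le)
                  (Real.rpow_le_rpow hM0 hMH (by linarith))
                  (Real.rpow_nonneg hM0 _)
                  (Real.rpow_nonneg (le_trans hM0 h6) _)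
            _ = cB^α * a^α * H^(1-α) := by rw [Real.mul_rpow hcB0 ha0]
            _ ≤ c1 * a^α * H^(1-α) := by
                have hle : cB^α ≤ c1 := le_max_left _ _
                exact mul_le_mul_of_nonneg_right
                  (mul_le_mul_of_nonneg_right hle (Real.rpow_nonneg ha0 _))
                  (Real.rpow_nonneg hH0 _)
        · -- small ρ
          have hsval : s = ρ/2 := by rw [hsdef, min_eq_left hcase.le]
          have hsm : s^m = M^(2*m) / ((32:ℝ)^m * H^(2*m)) := by
            have hs' : s = M^2/(32*H^2) := by
              rw [hsval, hρdef, htdef]; field_simp; ring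
            rw [hs', div_pow, ← pow_mul, mul_pow, ← pow_mul]
          set K := (2:ℝ)^p' * 32^m * H^(2*m) / ω with hKdef
          have hK0 : (0:ℝ) < K :=
            div_pos (mul_pos (mul_pos (Real.rpow_pos_of_pos two_pos _)
              (pow_pos (by norm_num) m)) (pow_pos hH1 _)) hω0
          have hXK : (M/2)^p' * (s^m * ω) * K = M^p' * M^(2*m) := by
            rw [Real.div_rpow hM0 (by norm_num : (0:ℝ) ≤ 2), hsm, hKdef]
            have h2p : ((2:ℝ)^p') ≠ 0 := ne_of_gt (Real.rpow_pos_of_pos two_pos _)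
            field_simp
          have h1 : M^p' * M^(2*m) ≤ β * K := by
            rw [← hXK]
            exact mul_le_mul_of_nonneg_right hβlow hK0.le
          have hM2m : (M:ℝ)^(2*m) = M ^ ((2*(m:ℝ)):ℝ) := by
            rw [← Real.rpow_natCast M (2*m)]
            norm_num
          have hc2 : M ^ (p' + 2*(m:ℝ)) ≤ β * K := by
            rw [Real.rpow_add hM1, ← hM2m]
            exact h1
          have hstep : M ≤ (β * K) ^ (1/(p'+2*(m:ℝ))) := by
            have h2 : (M ^ (p'+2*(m:ℝ))) ^ (1/(p'+2*(m:ℝ))) ≤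
                (β*K) ^ (1/(p'+2*(m:ℝ))) :=
              Real.rpow_le_rpow (Real.rpow_nonneg hM0 _) hc2 (one_div_pos.mpr hcden).le
            rwa [← Real.rpow_mul hM0, mul_one_div, div_self (ne_of_gt hcden),
              Real.rpow_one] at h2
          have hfrac2 : (0:ℝ) ≤ (2:ℝ)^p' * 32^m / ω :=
            div_nonneg (mul_nonneg (Real.rpow_nonneg (by norm_num) _) (by positivity)) hω0.le
          have hKsplit : K = ((2:ℝ)^p' * 32^m / ω) * H^(2*m) := by rw [hKdef]; ring
          have hexp : (β * K) ^ (1/(p'+2*(m:ℝ))) = cA * (a ^ α * H ^ (1-α)) := by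
            rw [hKsplit, Real.mul_rpow hβ0.le (mul_nonneg hfrac2 (pow_nonneg hH0 _)),
              Real.mul_rpow hfrac2 (pow_nonneg hH0 _)]
            have h4 : β^(1/(p'+2*(m:ℝ))) = a ^ α := by
              rw [← haβ, ← Real.rpow_mul ha0, mul_one_div, ← hαdef]
            have h5 : (H^(2*m)) ^ (1/(p'+2*(m:ℝ))) = H ^ (1-α) := by
              have hH2m : (H:ℝ)^(2*m) = H ^ ((2*(m:ℝ)):ℝ) := by
                rw [← Real.rpow_natCast H (2*m)]
                norm_num
              rw [hH2m, ← Real.rpow_mul hH0, mul_one_div]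
              congr 1
              rw [hαdef]
              field_simp
              ring
            rw [h4, h5, hcAdef]
            ring
          have hfin : M ≤ cA * (a ^ α * H ^ (1-α)) := by rw [← hexp]; exact hstep
          calc M ≤ cA * (a ^ α * H ^ (1-α)) := hfin
            _ ≤ c1 * (a ^ α * H ^ (1-α)) :=
                mul_le_mul_of_nonneg_right (le_max_right _ _)
                  (mul_nonneg (Real.rpow_nonneg ha0 _) (Real.rpow_nonneg hH0 _))
            _ = c1 * a ^ α * H ^ (1-α) := by ring
      -- now split on q
      rcases eq_or_ne q ∞ with hqt | hqt
      · -- q = ∞ : θ = α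
        have hq0 : q.toReal = 0 := by rw [hqt]; simp
        rw [hq0] at hrel
        simp only [div_zero, neg_zero] at hrel
        have hθα : θ = α := by
          have hp'ne : p' ≠ 0 := ne_of_gt hp'0
          have h2 : θ * ((m:ℝ)/p') = (1-θ)/2 := by linarith only [hrel]
          field_simp at h2
          rw [hαdef, eq_div_iff (ne_of_gt hcden)]
          linarith only [h2]
        rw [hqt]
        simp only [eLp, if_pos rfl, if_neg hpt]
        rw [← hp'def, ← hIpdef, hIpa]
        have hess : essSup f μ ≤ ENNReal.ofReal M :=
          essSup_le_of_ae_le _ (ae_restrict_of_forall_mem measurableSet_ball fun x hx => by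
            rw [hf x]; exact ENNReal.ofReal_le_ofReal (hMx x hx))
        calc essSup f μ ≤ ENNReal.ofReal M := hess
          _ ≤ ENNReal.ofReal (C * a^θ * H^(1-θ)) := by
              apply ENNReal.ofReal_le_ofReal
              rw [hθα]
              calc M ≤ c1 * a^α * H^(1-α) := hcore
                _ ≤ C * a^α * H^(1-α) :=
                    mul_le_mul_of_nonneg_right
                      (mul_le_mul_of_nonneg_right (le_max_right 1 c1)
                        (Real.rpow_nonneg ha0 _))
                      (Real.rpow_nonneg hH0 _)
          _ = ENNReal.ofReal C * ENNReal.ofReal a ^ θ * ENNReal.ofReal H ^ (1-θ) := by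
              rw [ENNReal.ofReal_mul (mul_nonneg hC0 (Real.rpow_nonneg ha0 _)),
                ENNReal.ofReal_mul hC0,
                ← ENNReal.ofReal_rpow_of_nonneg ha0 hθ0.le,
                ← ENNReal.ofReal_rpow_of_nonneg hH0 (by linarith)]
      · -- q finite
        have hq1 : 1 ≤ q.toReal := by
          rw [← ENNReal.toReal_one]; exact ENNReal.toReal_mono hqt hq
        set q' := q.toReal with hq'def
        have hq'0 : 0 < q' := by linarith
        have hq'ne : q' ≠ 0 := ne_of_gt hq'0
        have e1 : ((m:ℝ)/q') * q' = m := div_mul_cancel₀ _ hq'ne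
        have e2 : ((m:ℝ)/p') * p' = m := div_mul_cancel₀ _ (ne_of_gt hp'0)
        have hθval : θ * ((p' + 2*(m:ℝ)) * q') = p' * (q' + 2*(m:ℝ)) := by
          linear_combination (2*p'*q') * hrel + (2*p') * e1 + (-2*θ*q') * e2
        have hpq : p' ≤ q' := by
          have h1 : p' * (q'+2*(m:ℝ)) ≤ (p'+2*(m:ℝ))*q' := by
            calc p'*(q'+2*(m:ℝ)) = θ*((p'+2*(m:ℝ))*q') := hθval.symm
              _ ≤ 1*((p'+2*(m:ℝ))*q') :=
                  mul_le_mul_of_nonneg_right hθ1 (le_of_lt (mul_pos hcden hq'0))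
              _ = (p'+2*(m:ℝ))*q' := one_mul _
          have hmp : (m:ℝ)*p' ≤ (m:ℝ)*q' := by linarith only [h1]
          exact le_of_mul_le_mul_left hmp hm'
        set e := 1 - p'/q' with hedef
        have he0 : 0 ≤ e := by
          rw [hedef]
          have : p'/q' ≤ 1 := div_le_one_of_le₀ hpq hq'0.le
          linarith
        have he1 : e ≤ 1 := by
          rw [hedef]
          have : 0 ≤ p'/q' := by positivity
          linarith
        have hθformula : θ = p'*(q'+2*(m:ℝ)) / ((p'+2*(m:ℝ))*q') := by
          rw [eq_div_iff (ne_of_gt (mul_pos hcden hq'0))]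
          linear_combination hθval
        have hne1 : p'+2*(m:ℝ) ≠ 0 := ne_of_gt hcden
        have hθe1 : α * e + p'/q' = θ := by
          rw [hαdef, hedef, hθformula]
          field_simp
          ring
        have hθe2 : (1-α) * e = 1 - θ := by
          rw [hαdef, hedef, hθformula]
          field_simp
          ring
        set Iq := ∫⁻ x, f x ^ q' ∂μ with hIqdef
        have hIqtop : Iq ≠ ∞ := hIfin q' hq'0.le
        have hIqb : Iq ≤ ENNReal.ofReal (M ^ (q'-p')) * Ip := by
          rw [hIqdef, hIpdef, ← lintegral_const_mul' _ _ ENNReal.ofReal_ne_top]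
          refine lintegral_mono_ae (ae_restrict_of_forall_mem measurableSet_ball
            fun x hx => ?_)
          rw [hf x]
          have hreal : |u x| ^ q' ≤ M ^ (q'-p') * |u x| ^ p' := by
            rcases eq_or_lt_of_le (abs_nonneg (u x)) with h0 | h0
            · rw [← h0, Real.zero_rpow (ne_of_gt hq'0), Real.zero_rpow (ne_of_gt hp'0),
                mul_zero]
            · have hsplit : |u x| ^ q' = |u x| ^ (q'-p') * |u x| ^ p' := by
                rw [← Real.rpow_add h0]; ring_nf
              rw [hsplit]
              exact mul_le_mul_of_nonneg_right
                (Real.rpow_le_rpow (abs_nonneg _) (hMx x hx) (by linarith))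
                (Real.rpow_nonneg (abs_nonneg _) _)
          calc ENNReal.ofReal |u x| ^ q' = ENNReal.ofReal (|u x| ^ q') :=
              ENNReal.ofReal_rpow_of_nonneg (abs_nonneg _) hq'0.le
            _ ≤ ENNReal.ofReal (M ^ (q'-p') * |u x| ^ p') := ENNReal.ofReal_le_ofReal hreal
            _ = ENNReal.ofReal (M ^ (q'-p')) * ENNReal.ofReal |u x| ^ p' := by
                rw [ENNReal.ofReal_mul (Real.rpow_nonneg hM0 _),
                  ← ENNReal.ofReal_rpow_of_nonneg (abs_nonneg _) hp'0.le]
        set b := Iq.toReal with hbdef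
        have hb : b ≤ M^(q'-p') * β := by
          have h := ENNReal.toReal_mono
            ((ENNReal.mul_lt_top ENNReal.ofReal_lt_top hIptop.lt_top).ne) hIqb
          rwa [ENNReal.toReal_mul, ENNReal.toReal_ofReal (Real.rpow_nonneg hM0 _)] at h
        have hc1C : c1 ^ e ≤ C := by
          rcases le_or_gt c1 1 with h | h
          · exact le_trans (Real.rpow_le_one hc10 h he0) hC1
          · calc c1 ^ e ≤ c1 ^ (1:ℝ) := Real.rpow_le_rpow_of_exponent_le h.le he1
              _ = c1 := Real.rpow_one c1
              _ ≤ C := le_max_right _ _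
        have hrealfin : b ^ (1/q') ≤ C * a^θ * H^(1-θ) := by
          have h1 : b ^ (1/q') ≤ (M^(q'-p') * β) ^ (1/q') :=
            Real.rpow_le_rpow ENNReal.toReal_nonneg hb (one_div_pos.mpr hq'0).le
          have h2 : (M^(q'-p') * β) ^ (1/q') = M ^ e * a ^ (p'/q') := by
            rw [Real.mul_rpow (Real.rpow_nonneg hM0 _) hβ0.le,
              ← Real.rpow_mul hM0, mul_one_div, ← haβ, ← Real.rpow_mul ha0, mul_one_div]
            congr 2
            rw [hedef]
            field_simp
          have h4 : M ^ e ≤ (c1 * a^α * H^(1-α)) ^ e := Real.rpow_le_rpow hM0 hcore he0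
          have h5 : (c1 * a^α * H^(1-α)) ^ e = c1^e * a^(α*e) * H^((1-α)*e) := by
            rw [Real.mul_rpow (mul_nonneg hc10 (Real.rpow_nonneg ha0 _))
                (Real.rpow_nonneg hH0 _),
              Real.mul_rpow hc10 (Real.rpow_nonneg ha0 _),
              ← Real.rpow_mul ha0, ← Real.rpow_mul hH0]
          calc b ^ (1/q') ≤ M ^ e * a ^ (p'/q') := by rw [← h2]; exact h1
            _ ≤ (c1^e * a^(α*e) * H^((1-α)*e)) * a ^ (p'/q') := by
                apply mul_le_mul_of_nonneg_right _ (Real.rpow_nonneg ha0 _)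
                rw [← h5]; exact h4
            _ = c1^e * (a^(α*e) * a^(p'/q')) * H^((1-α)*e) := by ring
            _ = c1^e * a^(α*e + p'/q') * H^((1-α)*e) := by rw [← Real.rpow_add ha1]
            _ = c1^e * a^θ * H^(1-θ) := by rw [hθe1, hθe2]
            _ ≤ C * a^θ * H^(1-θ) :=
                mul_le_mul_of_nonneg_right
                  (mul_le_mul_of_nonneg_right hc1C (Real.rpow_nonneg ha0 _))
                  (Real.rpow_nonneg hH0 _)
        have hIqa : Iq ^ (1/q') = ENNReal.ofReal (b ^ (1/q')) := by
          rw [← ENNReal.ofReal_toReal hIqtop, ← hbdef]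
          exact (ENNReal.ofReal_rpow_of_nonneg ENNReal.toReal_nonneg
            (one_div_pos.mpr hq'0).le)
        simp only [eLp, if_neg hqt, if_neg hpt]
        rw [← hp'def, ← hq'def, ← hIpdef, ← hIqdef, hIpa, hIqa]
        calc ENNReal.ofReal (b ^ (1/q'))
            ≤ ENNReal.ofReal (C * a^θ * H^(1-θ)) := ENNReal.ofReal_le_ofReal hrealfin
          _ = ENNReal.ofReal C * ENNReal.ofReal a ^ θ * ENNReal.ofReal H ^ (1-θ) := by
              rw [ENNReal.ofReal_mul (mul_nonneg hC0 (Real.rpow_nonneg ha0 _)),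
                ENNReal.ofReal_mul hC0,
                ← ENNReal.ofReal_rpow_of_nonneg ha0 hθ0.le,
                ← ENNReal.ofReal_rpow_of_nonneg hH0 (by linarith)]

end
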